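/- If a monoid action M ↷ X by injections admits a big Ramsey colouring with k colours and also has finite big Ramsey degree t, then k = t. -/
import Mathlib


def HasDegLE (M X : Type) [Monoid M] [MulAction M X] (t : ℕ) : Prop :=
  ∀ (l : ℕ) (ψ : X → Fin l), ∃ p : M,
    (ψ '' Set.range (fun x : X => p • x)).ncard ≤ t

def Persistent (M X : Type) [Monoid M] [MulAction M X] {k : ℕ} (χ : X → Fin k) : Prop :=
  ∀ p : M, Set.range (fun x : X => χ (p • x)) = Set.univ

def UniversalCol (M X : Type) [Monoid M] [MulAction M X] {k : ℕ} (χ : X → Fin k) : Prop :=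
  ∀ (l : ℕ) (ψ : X → Fin l) (p : M), ∃ (q : M) (f : Fin k → Fin l),
    ∀ x : X, ψ ((p * q) • x) = f (χ ((p * q) • x))

theorem bigRamseyColouring_card_eq_degree
    (M X : Type) [Monoid M] [MulAction M X]
    (hinj : ∀ p : M, Function.Injective (fun x : X => p • x))
    (k : ℕ) (χ : X → Fin k) (hpers : Persistent M X χ) (huniv : UniversalCol M X χ)
    (t : ℕ) (hdeg : HasDegLE M X t) (hmin : ∀ s : ℕ, HasDegLE M X s → t ≤ s) :
    k = t := by
  have hset : ∀ (l : ℕ) (ψ : X → Fin l) (p : M),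
      ψ '' Set.range (fun x : X => p • x) = Set.range (fun x : X => ψ (p • x)) := by
    intro l ψ p
    rw [← Set.range_comp]; rfl
  -- k ≤ t : apply hdeg to χ itself.
  have h1 : k ≤ t := by
    obtain ⟨p, hp⟩ := hdeg k χ
    rw [hset, hpers p, Set.ncard_univ, Nat.card_eq_fintype_card, Fintype.card_fin] at hp
    exact hp
  -- t ≤ k : χ is universal, so HasDegLE M X k.
  have h2 : HasDegLE M X k := by
    intro l ψ
    obtain ⟨q, f, hf⟩ := huniv l ψ 1
    refine ⟨1 * q, ?_⟩
    rw [hset]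
    have hsub : Set.range (fun x : X => ψ ((1 * q) • x)) ⊆ Set.range f := by
      rintro y ⟨x, rfl⟩
      exact ⟨χ ((1 * q) • x), (hf x).symm⟩
    have hrf : (Set.range f).ncard ≤ k := by
      rw [← Set.image_univ]
      calc (f '' Set.univ).ncard ≤ (Set.univ : Set (Fin k)).ncard :=
            Set.ncard_image_le Set.finite_univ
        _ = k := by rw [Set.ncard_univ, Nat.card_eq_fintype_card, Fintype.card_fin]
    exact le_trans (Set.ncard_le_ncard hsub (Set.finite_range f)) hrf
  exact le_antisymm h1 (hmin k h2)
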